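/- Let H be a hypergraph admitting a tree decomposition of fractional hypertree width at most ω. Then for every set S ⊆ V(H), ρ*_H(S) ≤ α_H(S)·ω. -/

import Mathlib

open Finset
open scoped ENNReal

/-- A hypergraph: a finite vertex set, a finite set of nonempty hyperedges covering
all vertices. -/
structure FinHypergraph (α : Type*) where
  V : Finset α
  E : Finset (Finset α)
  edge_sub : ∀ e ∈ E, e ⊆ V
  edge_nonempty : ∀ e ∈ E, e.Nonempty
  no_isolated : ∀ v ∈ V, ∃ e ∈ E, v ∈ e

/-- Degeneracy of a graph restricted to a finite vertex set `W`: the least `d` such that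
every nonempty subset has a vertex with at most `d` neighbours inside the subset. -/
noncomputable def degeneracyOn {β : Type*} (G : SimpleGraph β) (W : Finset β) : ℕ :=
  sInf {d : ℕ | ∀ W' ⊆ W, W'.Nonempty → ∃ v ∈ W', ((W' : Set β) ∩ G.neighborSet v).ncard ≤ d}

namespace FinHypergraph

variable {α : Type*}

/-- The primal (Gaifman) graph of a hypergraph. -/
def primal (H : FinHypergraph α) : SimpleGraph α where
  Adj u v := u ≠ v ∧ ∃ e ∈ H.E, u ∈ e ∧ v ∈ e
  symm := by
    refine ⟨?_⟩
    rintro u v ⟨hne, e, he, hu, hv⟩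
    exact ⟨hne.symm, e, he, hv, hu⟩
  loopless := by
    refine ⟨?_⟩
    rintro u ⟨hne, -⟩
    exact hne rfl

/-- `S` is an `(A,B)`-separator in `H`: every path of the primal graph from a vertex
of `A` to a vertex of `B` meets `S`. -/
def IsSeparator (H : FinHypergraph α) (A B S : Finset α) : Prop :=
  ∀ a ∈ A, ∀ b ∈ B, ∀ p : H.primal.Walk a b, p.IsPath → ∃ v ∈ p.support, v ∈ S

/-- `x` is a fractional `(A,B)`-separator in `H`. -/
def IsFracSeparator [DecidableEq α] (H : FinHypergraph α) (A B : Finset α) (x : α → ℝ) : Prop :=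
  ∀ a ∈ A, ∀ b ∈ B, ∀ p : H.primal.Walk a b, p.IsPath →
    1 ≤ ∑ w ∈ p.support.toFinset, x w

/-- Fractional edge cover number of a weight function `x` on vertices. -/
noncomputable def fracCover [DecidableEq α] (H : FinHypergraph α) (x : α → ℝ) : ℝ :=
  sInf {c : ℝ | ∃ y : Finset α → ℝ, (∀ e, 0 ≤ y e ∧ y e ≤ 1) ∧
    (∀ v ∈ H.V, x v ≤ ∑ e ∈ H.E, if v ∈ e then y e else 0) ∧
    c = ∑ e ∈ H.E, y e}

/-- Fractional edge cover number `ρ*_H(S)` of a vertex set. -/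
noncomputable def fracCoverSet [DecidableEq α] (H : FinHypergraph α) (S : Finset α) : ℝ :=
  H.fracCover (fun v => if v ∈ S then 1 else 0)

/-- Fractional `E`-edge cover number of `x` (`∞` if no fractional `E`-edge cover exists). -/
noncomputable def fracCoverE [DecidableEq α] (H : FinHypergraph α) (E : Finset (Finset α))
    (x : α → ℝ) : ℝ≥0∞ :=
  sInf {c : ℝ≥0∞ | ∃ y : Finset α → ℝ, (∀ e, 0 ≤ y e ∧ y e ≤ 1) ∧
    (∀ v ∈ H.V, x v ≤ ∑ e ∈ E, if v ∈ e then y e else 0) ∧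
    c = ENNReal.ofReal (∑ e ∈ E, y e)}

/-- Fractional `E`-edge cover number `ρ*_{H,E}(S)` of a vertex set. -/
noncomputable def fracCoverESet [DecidableEq α] (H : FinHypergraph α) (E : Finset (Finset α))
    (S : Finset α) : ℝ≥0∞ :=
  H.fracCoverE E (fun v => if v ∈ S then 1 else 0)

/-- Integral edge cover number `ρ_H(S)`. -/
noncomputable def intCover [DecidableEq α] (H : FinHypergraph α) (S : Finset α) : ℕ :=
  sInf {n : ℕ | ∃ F ⊆ H.E, S ⊆ F.biUnion id ∧ F.card = n}

/-- Independence number `α_H(R)`: maximum size of a subset of `R` such that no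
hyperedge contains two of its vertices. -/
noncomputable def indepNum [DecidableEq α] (H : FinHypergraph α) (R : Finset α) : ℕ :=
  sSup {n : ℕ | ∃ I ⊆ R, (∀ e ∈ H.E, (I ∩ e).card ≤ 1) ∧ I.card = n}

/-- Maximum intersection size `η_H` of two distinct hyperedges. -/
noncomputable def eta [DecidableEq α] (H : FinHypergraph α) : ℕ :=
  sSup {n : ℕ | ∃ e₁ ∈ H.E, ∃ e₂ ∈ H.E, e₁ ≠ e₂ ∧ n = (e₁ ∩ e₂).card}

/-- The (bipartite) incidence graph of a hypergraph. -/
def incidence (H : FinHypergraph α) : SimpleGraph (α ⊕ Finset α) where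
  Adj p q :=
    (∃ v e, p = Sum.inl v ∧ q = Sum.inr e ∧ e ∈ H.E ∧ v ∈ e) ∨
    (∃ v e, p = Sum.inr e ∧ q = Sum.inl v ∧ e ∈ H.E ∧ v ∈ e)
  symm := by
    refine ⟨?_⟩
    rintro p q (⟨v, e, rfl, rfl, he, hv⟩ | ⟨v, e, rfl, rfl, he, hv⟩)
    · exact Or.inr ⟨v, e, rfl, rfl, he, hv⟩
    · exact Or.inl ⟨v, e, rfl, rfl, he, hv⟩
  loopless := by
    refine ⟨?_⟩
    rintro p (⟨v, e, rfl, h, -, -⟩ | ⟨v, e, rfl, h, -, -⟩) <;> exact absurd h (by simp)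

/-- `μ_H`: degeneracy of the incidence graph of `H`. -/
noncomputable def mu [DecidableEq α] (H : FinHypergraph α) : ℕ :=
  degeneracyOn H.incidence (H.V.image Sum.inl ∪ H.E.image Sum.inr)

/-- `γ(P) = ∑_{e ∈ E(H) : e ∩ P ≠ ∅} γ(e)`. -/
noncomputable def edgeWeight [DecidableEq α] (H : FinHypergraph α) (γ : Finset α → ℝ)
    (P : Finset α) : ℝ :=
  ∑ e ∈ H.E, if (e ∩ P).Nonempty then γ e else 0

/-- `u` can reach `v` by a walk of the primal graph avoiding `S`. -/
def ReachOutside (H : FinHypergraph α) (S : Finset α) (u v : α) : Prop :=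
  ∃ p : H.primal.Walk u v, ∀ w ∈ p.support, w ∉ S

/-- The connected component of `v` in the primal graph of `H` after deleting `S`. -/
noncomputable def comp (H : FinHypergraph α) (S : Finset α) (v : α) : Finset α := by
  classical exact H.V.filter (fun u => H.ReachOutside S v u)

/-- `S` is a `(γ,φ)`-balanced separator in `H`. -/
def IsGammaBalSep [DecidableEq α] (H : FinHypergraph α) (γ : Finset α → ℝ) (φ : ℝ)
    (S : Finset α) : Prop :=
  ∀ v ∈ H.V, v ∉ S → H.edgeWeight γ (H.comp S v) ≤ φ * H.edgeWeight γ H.V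

/-- `S` is a `(Z,φ)`-balanced separator in `H`. -/
def IsZBalSep [DecidableEq α] (H : FinHypergraph α) (Z : Finset α) (φ : ℝ)
    (S : Finset α) : Prop :=
  ∀ v ∈ H.V, v ∉ S →
    H.fracCoverSet (H.comp S v ∩ Z) ≤ φ * H.fracCoverSet Z

/-- `dist*_{H,x}(u,v)`: the minimum of `1` and the minimum total `x`-weight of a path
from `u` to `v` in the primal graph. -/
noncomputable def dist1 [DecidableEq α] (H : FinHypergraph α) (x : α → ℝ) (u v : α) : ℝ :=
  sInf ({1} ∪ {c : ℝ | ∃ p : H.primal.Walk u v, p.IsPath ∧ c = ∑ w ∈ p.support.toFinset, x w})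

/-- `dist*_{H,x}(e,e') = min_{u ∈ e, v ∈ e'} dist*_{H,x}(u,v)`. -/
noncomputable def distE [DecidableEq α] (H : FinHypergraph α) (x : α → ℝ)
    (e e' : Finset α) : ℝ :=
  sInf {c : ℝ | ∃ u ∈ e, ∃ v ∈ e', c = H.dist1 x u v}

/-- `x` is a fractional `(γ,φ)`-balanced separator in `H`. -/
def IsFracGammaBalSep [DecidableEq α] (H : FinHypergraph α) (γ : Finset α → ℝ) (φ : ℝ)
    (x : α → ℝ) : Prop :=
  ∀ e ∈ H.E, (1 - φ) * (∑ e' ∈ H.E, γ e') ≤ ∑ e' ∈ H.E, H.distE x e e' * γ e'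

/-- The induced subhypergraph `H[Q]` for `Q ⊆ V(H)`. -/
def induce [DecidableEq α] (H : FinHypergraph α) (Q : Finset α) (hQ : Q ⊆ H.V) :
    FinHypergraph α where
  V := Q
  E := (H.E.image (fun e => e ∩ Q)).filter (fun e => e.Nonempty)
  edge_sub := by
    intro e he
    simp only [mem_filter, mem_image] at he
    obtain ⟨⟨e', -, rfl⟩, -⟩ := he
    exact inter_subset_right
  edge_nonempty := by
    intro e he
    exact (mem_filter.mp he).2
  no_isolated := by
    intro v hv
    obtain ⟨e, he, hve⟩ := H.no_isolated v (hQ hv)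
    exact ⟨e ∩ Q, mem_filter.mpr ⟨mem_image.mpr ⟨e, he, rfl⟩,
      ⟨v, mem_inter.mpr ⟨hve, hv⟩⟩⟩, mem_inter.mpr ⟨hve, hv⟩⟩

/-- The ball `B^Q_c(r)` of radius `r` around `c` in `H[Q]` with respect to `x`. -/
noncomputable def ball [DecidableEq α] (H : FinHypergraph α) (x : α → ℝ) (Q : Finset α)
    (hQ : Q ⊆ H.V) (c : α) (r : ℝ) : Finset α := by
  classical exact Q.filter (fun v => (H.induce Q hQ).dist1 x c v ≤ r)

end FinHypergraph

/-- A tree decomposition of a hypergraph. -/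
structure TreeDecomp {α : Type*} (H : FinHypergraph α) where
  ι : Type
  fintype : Fintype ι
  T : SimpleGraph ι
  isTree : T.IsTree
  bag : ι → Finset α
  bag_sub : ∀ t, bag t ⊆ H.V
  bag_conn : ∀ v ∈ H.V, (SimpleGraph.induce {t | v ∈ bag t} T).Connected
  edge_bag : ∀ e ∈ H.E, ∃ t, e ⊆ bag t
set_option linter.unusedSectionVars false
open Finset

namespace TreeAux

variable {ι : Type*} [DecidableEq ι] {T : SimpleGraph ι}

/-- The unique path between two vertices of a tree. -/
noncomputable def treePath (hT : T.IsTree) (a b : ι) : T.Walk a b :=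
  (hT.existsUnique_path a b).choose

lemma treePath_isPath (hT : T.IsTree) (a b : ι) : (treePath hT a b).IsPath :=
  (hT.existsUnique_path a b).choose_spec.1

lemma treePath_unique (hT : T.IsTree) {a b : ι} (p : T.Walk a b) (hp : p.IsPath) :
    p = treePath hT a b :=
  (hT.existsUnique_path a b).choose_spec.2 p hp

lemma path_length_eq_dist (hT : T.IsTree) {a b : ι} (p : T.Walk a b) (hp : p.IsPath) :
    p.length = T.dist a b := by
  obtain ⟨w, hw⟩ := hT.isConnected.exists_walk_length_eq_dist a b
  have h1 : w.bypass = p := by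
    rw [treePath_unique hT p hp, treePath_unique hT w.bypass w.bypass_isPath]
  refine le_antisymm ?_ (SimpleGraph.dist_le p)
  calc p.length = w.bypass.length := by rw [h1]
    _ ≤ w.length := w.length_bypass_le
    _ = T.dist a b := hw

lemma path_support_subset_walk (hT : T.IsTree) {a b : ι} (p : T.Walk a b) (hp : p.IsPath)
    (w : T.Walk a b) : p.support ⊆ w.support := by
  have h1 : w.bypass = p := by
    rw [treePath_unique hT p hp, treePath_unique hT w.bypass w.bypass_isPath]
  rw [← h1]
  exact w.support_bypass_subset

lemma dist_add_dist_of_mem_path (hT : T.IsTree) {a b t : ι} (p : T.Walk a b) (hp : p.IsPath)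
    (ht : t ∈ p.support) : T.dist a t + T.dist t b = T.dist a b := by
  have h1 := path_length_eq_dist hT _ (hp.takeUntil ht)
  have h2 := path_length_eq_dist hT _ (hp.dropUntil ht)
  have h3 : (p.takeUntil t ht).length + (p.dropUntil t ht).length = p.length := by
    rw [← SimpleGraph.Walk.length_append, SimpleGraph.Walk.take_spec]
  have h4 := path_length_eq_dist hT p hp
  omega

lemma gate (hT : T.IsTree) (r : ι) (C : Set ι) :
    ∀ {c t0 : ι} (q : T.Walk c t0), (∀ t ∈ C, T.dist r t0 ≤ T.dist r t) →
      (∀ x ∈ q.support, x ∈ C) →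
      ∀ (p : T.Walk r c), p.IsPath → t0 ∈ p.support := by
  intro c t0 q
  induction q with
  | nil => exact fun _ _ p _ => p.end_mem_support
  | @cons c d t0 h q ih =>
    intro hmin hsup p hp
    have hsub : ∀ x ∈ q.support, x ∈ C := fun x hx => hsup x
      (by rw [SimpleGraph.Walk.support_cons]; exact List.mem_cons_of_mem _ hx)
    by_cases hmem : d ∈ p.support
    · exact p.support_takeUntil_subset hmem (ih hmin hsub
        (p.takeUntil d hmem) (hp.takeUntil hmem))
    · have hp2 : (p.concat h).IsPath := by
        rw [← SimpleGraph.Walk.isPath_reverse_iff, SimpleGraph.Walk.reverse_concat]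
        exact (hp.reverse).cons (by rwa [SimpleGraph.Walk.support_reverse, List.mem_reverse])
      have ht0 : t0 ∈ (p.concat h).support := ih hmin hsub (p.concat h) hp2
      rw [SimpleGraph.Walk.support_concat, List.mem_append] at ht0
      rcases ht0 with ht0 | ht0
      · exact ht0
      · exfalso
        have ht0d : t0 = d := by simpa using ht0
        have hcC : c ∈ C := hsup c (SimpleGraph.Walk.start_mem_support _)
        have h1 : T.dist r c = p.length := (path_length_eq_dist hT p hp).symm
        have h2 : T.dist r d = p.length + 1 := by
          have := path_length_eq_dist hT (p.concat h) hp2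
          rw [SimpleGraph.Walk.length_concat] at this
          exact this.symm
        have h3 := hmin c hcC
        rw [ht0d] at h3
        omega


/-- Helly-type covering lemma for subtrees of a tree. -/
lemma exists_cover {ι α' : Type*} [DecidableEq ι] [DecidableEq α'] {T : SimpleGraph ι}
    (hT : T.IsTree) (C : α' → Finset ι) :
    ∀ (n : ℕ) (S : Finset α'), S.card ≤ n →
      (∀ v ∈ S, (C v).Nonempty) →
      (∀ v ∈ S, ∀ a ∈ C v, ∀ b ∈ C v, ∃ q : T.Walk a b, ∀ x ∈ q.support, x ∈ C v) →
      ∃ (X : Finset ι) (I : Finset α'), I ⊆ S ∧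
        (∀ u ∈ I, ∀ v ∈ I, u ≠ v → ∀ t, t ∈ C u → t ∉ C v) ∧
        X.card ≤ I.card ∧ ∀ v ∈ S, ∃ t ∈ X, t ∈ C v := by
  intro n
  induction n with
  | zero =>
    intro S hcard _ _
    have hS : S = ∅ := Finset.card_eq_zero.mp (Nat.le_zero.mp hcard)
    subst hS
    exact ⟨∅, ∅, Finset.Subset.refl _, by simp, le_rfl, by simp⟩
  | succ n ih =>
    intro S hcard hne hconn
    rcases S.eq_empty_or_nonempty with rfl | ⟨v0, hv0⟩
    · exact ⟨∅, ∅, Finset.Subset.refl _, by simp, le_rfl, by simp⟩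
    obtain ⟨r, -⟩ := hne v0 hv0
    set g : α' → ℕ := fun u =>
      if h : (C u).Nonempty then ((C u).image (T.dist r)).min' (h.image _) else 0 with hg
    have gspec : ∀ u ∈ S, ∃ tu ∈ C u, T.dist r tu = g u ∧ ∀ t ∈ C u, g u ≤ T.dist r t := by
      intro u hu
      have hCu := hne u hu
      have hmem := ((C u).image (T.dist r)).min'_mem (hCu.image _)
      rw [Finset.mem_image] at hmem
      obtain ⟨tu, htu, hd⟩ := hmem
      refine ⟨tu, htu, by rw [hg]; simp only [dif_pos hCu]; exact hd, ?_⟩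
      intro t ht
      rw [hg]; simp only [dif_pos hCu]
      exact Finset.min'_le _ _ (Finset.mem_image_of_mem _ ht)
    obtain ⟨vs, hvs, hvsmax⟩ := S.exists_max_image g ⟨v0, hv0⟩
    obtain ⟨ts, hts, htsval, htsmin⟩ := gspec vs hvs
    -- the key claim
    have key : ∀ u ∈ S, ∀ c, c ∈ C u → c ∈ C vs → ts ∈ C u := by
      intro u hu c hcu hcvs
      obtain ⟨tu, htu, htuval, -⟩ := gspec u hu
      have hPu : ∀ a ∈ C u, ∀ b ∈ C u, ∀ (p : T.Walk a b), p.IsPath →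
          ∀ x ∈ p.support, x ∈ C u := by
        intro a ha b hb p hp x hx
        obtain ⟨w, hw⟩ := hconn u hu a ha b hb
        exact hw x (path_support_subset_walk hT p hp w hx)
      -- gate: ts lies on the unique path from r to c
      obtain ⟨qcs, hqcs⟩ := hconn vs hvs c hcvs ts hts
      have hmin' : ∀ t ∈ (↑(C vs) : Set ι), T.dist r ts ≤ T.dist r t := by
        intro t ht
        rw [htsval]
        exact htsmin t ht
      have hgate : ts ∈ (treePath hT r c).support :=
        gate hT r (↑(C vs)) qcs hmin' (fun x hx => hqcs x hx) (treePath hT r c)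
          (treePath_isPath hT r c)
      -- transfer to the walk through tu
      set P1 := treePath hT r tu with hP1
      set P2 := treePath hT tu c with hP2
      have hts2 : ts ∈ (P1.append P2).support :=
        path_support_subset_walk hT (treePath hT r c) (treePath_isPath hT r c)
          (P1.append P2) hgate
      rw [SimpleGraph.Walk.support_append, List.mem_append] at hts2
      rcases hts2 with hts2 | hts2
      · -- ts on the path from r to tu; then ts = tu
        have hsplit := dist_add_dist_of_mem_path hT P1 (treePath_isPath hT r tu) hts2
        have h1 : T.dist r tu = g u := htuval
        have h2 : g u ≤ g vs := hvsmax u hu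
        have h3 : T.dist r ts = g vs := htsval
        have h4 : T.dist ts tu = 0 := by omega
        have h5 : ts = tu := (hT.isConnected.dist_eq_zero_iff).mp h4
        rw [h5]; exact htu
      · -- ts on the path from tu to c, which stays inside C u
        exact hPu tu htu c hcu P2 (treePath_isPath hT tu c) ts
          (List.mem_of_mem_tail hts2)
    -- recurse on the vertices missed by ts
    set S' := S.filter (fun u => ts ∉ C u) with hS'
    have hvs' : vs ∉ S' := by
      rw [hS', Finset.mem_filter]
      push_neg
      exact fun _ => by simpa using hts
    have hS'sub : S' ⊆ S := Finset.filter_subset _ _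
    have hS'card : S'.card ≤ n := by
      have hlt : S'.card < S.card :=
        Finset.card_lt_card (Finset.ssubset_iff_of_subset hS'sub |>.mpr ⟨vs, hvs, hvs'⟩)
      omega
    obtain ⟨X', I', hI'sub, hI'disj, hcard', hcover'⟩ := ih S' hS'card
      (fun v hv => hne v (hS'sub hv)) (fun v hv => hconn v (hS'sub hv))
    have hvsI' : vs ∉ I' := fun h => hvs' (hI'sub h)
    refine ⟨insert ts X', insert vs I', ?_, ?_, ?_, ?_⟩
    · intro u hu
      rcases Finset.mem_insert.mp hu with rfl | hu
      · exact hvs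
      · exact hS'sub (hI'sub hu)
    · intro u hu v hv huv t htu htv
      rcases Finset.mem_insert.mp hu with hequ | hu <;>
        rcases Finset.mem_insert.mp hv with heqv | hv
      · exact huv (hequ.trans heqv.symm)
      · -- u = vs, v ∈ I'
        rw [hequ] at htu
        have : ts ∈ C v := key v (hS'sub (hI'sub hv)) t htv htu
        have hvS' := hI'sub hv
        rw [hS', Finset.mem_filter] at hvS'
        exact hvS'.2 this
      · rw [heqv] at htv
        have : ts ∈ C u := key u (hS'sub (hI'sub hu)) t htu htv
        have huS' := hI'sub hu
        rw [hS', Finset.mem_filter] at huS'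
        exact huS'.2 this
      · exact hI'disj u hu v hv huv t htu htv
    · calc (insert ts X').card ≤ X'.card + 1 := Finset.card_insert_le _ _
        _ ≤ I'.card + 1 := by omega
        _ = (insert vs I').card := (Finset.card_insert_of_notMem hvsI').symm
    · intro v hv
      by_cases htsv : ts ∈ C v
      · exact ⟨ts, Finset.mem_insert_self _ _, htsv⟩
      · have : v ∈ S' := by rw [hS', Finset.mem_filter]; exact ⟨hv, htsv⟩
        obtain ⟨t, htX', htC⟩ := hcover' v this
        exact ⟨t, Finset.mem_insert_of_mem htX', htC⟩

end TreeAux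


/-- If `H` admits a tree decomposition of fractional hypertree width
at most `ω`, then `ρ*_H(S) ≤ α_H(S)·ω` for every `S ⊆ V(H)`. -/
theorem fracCover_le_indepNum_mul_width {α : Type*} [DecidableEq α] (H : FinHypergraph α)
    (D : TreeDecomp H) (ω : ℝ) (hω : ∀ t, H.fracCoverSet (D.bag t) ≤ ω)
    (S : Finset α) (hS : S ⊆ H.V) :
    H.fracCoverSet S ≤ (H.indepNum S : ℝ) * ω := by
    classical
  haveI : Fintype D.ι := D.fintype
  set Cv : α → Finset D.ι := fun v => Finset.univ.filter (fun t => v ∈ D.bag t) with hCv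
  have hCv_mem : ∀ v t, t ∈ Cv v ↔ v ∈ D.bag t := by intro v t; simp [hCv]
  have hne : ∀ v ∈ S, (Cv v).Nonempty := by
    intro v hv
    obtain ⟨e, he, hve⟩ := H.no_isolated v (hS hv)
    obtain ⟨t, ht⟩ := D.edge_bag e he
    exact ⟨t, (hCv_mem v t).mpr (ht hve)⟩
  have hconn : ∀ v ∈ S, ∀ a ∈ Cv v, ∀ b ∈ Cv v,
      ∃ q : D.T.Walk a b, ∀ x ∈ q.support, x ∈ Cv v := by
    intro v hv a ha b hb
    have hc := D.bag_conn v (hS hv)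
    have ha' : a ∈ {t | v ∈ D.bag t} := (hCv_mem v a).mp ha
    have hb' : b ∈ {t | v ∈ D.bag t} := (hCv_mem v b).mp hb
    obtain ⟨q⟩ := hc ⟨a, ha'⟩ ⟨b, hb'⟩
    refine ⟨q.map (SimpleGraph.Embedding.induce _).toHom, ?_⟩
    intro x hx
    replace hx : x ∈ (q.map (SimpleGraph.Embedding.induce {t | v ∈ D.bag t}).toHom).support := hx
    rw [SimpleGraph.Walk.support_map, List.mem_map] at hx
    obtain ⟨⟨y, hy⟩, -, rfl⟩ := hx
    exact (hCv_mem v _).mpr hy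
  obtain ⟨X, I, hIsub, hIdisj, hXI, hXcov⟩ :=
    TreeAux.exists_cover D.isTree Cv S.card S le_rfl hne hconn
  have hIindep : I.card ≤ H.indepNum S := by
    apply le_csSup
    · exact ⟨S.card, fun n hn => by obtain ⟨J, hJ, -, rfl⟩ := hn; exact Finset.card_le_card hJ⟩
    · refine ⟨I, hIsub, ?_, rfl⟩
      intro e he
      by_contra hcon
      push_neg at hcon
      obtain ⟨a, ha, b, hb, hab⟩ := Finset.one_lt_card.mp hcon
      obtain ⟨t, ht⟩ := D.edge_bag e he
      rw [Finset.mem_inter] at ha hb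
      exact hIdisj a ha.1 b hb.1 hab t ((hCv_mem a t).mpr (ht ha.2)) ((hCv_mem b t).mpr (ht hb.2))
  have hbdd : ∀ (x : α → ℝ), BddBelow {c : ℝ | ∃ y : Finset α → ℝ, (∀ e, 0 ≤ y e ∧ y e ≤ 1) ∧
      (∀ v ∈ H.V, x v ≤ ∑ e ∈ H.E, if v ∈ e then y e else 0) ∧ c = ∑ e ∈ H.E, y e} := by
    intro x
    refine ⟨0, ?_⟩
    rintro c ⟨y, hy, -, rfl⟩
    exact Finset.sum_nonneg fun e _ => (hy e).1
  have homega : 0 ≤ ω := by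
    obtain ⟨t0⟩ : Nonempty D.ι := D.isTree.isConnected.nonempty
    refine le_trans ?_ (hω t0)
    rw [FinHypergraph.fracCoverSet, FinHypergraph.fracCover]
    apply Real.sInf_nonneg
    rintro c ⟨y, hy, -, rfl⟩
    exact Finset.sum_nonneg fun e _ => (hy e).1
  have key : ∀ ε : ℝ, 0 < ε → H.fracCoverSet S ≤ (H.indepNum S : ℝ) * ω + ε := by
    intro ε hε
    by_cases hX0 : X = ∅
    · have hSempty : S = ∅ := by
        rw [Finset.eq_empty_iff_forall_notMem]
        intro v hv
        obtain ⟨t, htX, -⟩ := hXcov v hv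
        rw [hX0] at htX
        exact absurd htX (Finset.notMem_empty t)
      have h0 : H.fracCoverSet S ≤ 0 := by
        rw [FinHypergraph.fracCoverSet, FinHypergraph.fracCover]
        apply csInf_le (hbdd _)
        refine ⟨fun _ => 0, fun e => ⟨le_rfl, zero_le_one⟩, ?_, by simp⟩
        intro v hv
        rw [hSempty]
        simp only [Finset.notMem_empty, if_false]
        exact Finset.sum_nonneg fun e _ => by
          by_cases hve : v ∈ e
          · rw [if_pos hve]
          · rw [if_neg hve]
      have hpos : 0 ≤ (H.indepNum S : ℝ) * ω := mul_nonneg (Nat.cast_nonneg _) homega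
      linarith
    · have hk : 0 < X.card := Finset.card_pos.mpr (Finset.nonempty_of_ne_empty hX0)
      set k := X.card with hkdef
      have hk0 : ((k : ℝ)) ≠ 0 := by positivity
      set δ := ε / (k : ℝ) with hδdef
      have hδ : 0 < δ := div_pos hε (by positivity)
      have hyt : ∀ t : D.ι, ∃ y : Finset α → ℝ, (∀ e, 0 ≤ y e ∧ y e ≤ 1) ∧
          (∀ v ∈ H.V, (if v ∈ D.bag t then (1:ℝ) else 0) ≤
            ∑ e ∈ H.E, if v ∈ e then y e else 0) ∧
          ∑ e ∈ H.E, y e ≤ ω + δ := by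
        intro t
        set A := {c : ℝ | ∃ y : Finset α → ℝ, (∀ e, 0 ≤ y e ∧ y e ≤ 1) ∧
          (∀ v ∈ H.V, (if v ∈ D.bag t then (1:ℝ) else 0) ≤
            ∑ e ∈ H.E, if v ∈ e then y e else 0) ∧
          c = ∑ e ∈ H.E, y e} with hA
        have hAbdd : BddBelow A := hbdd _
        have hAne : A.Nonempty := by
          refine ⟨∑ e ∈ H.E, (1:ℝ), fun _ => 1, fun e => ⟨zero_le_one, le_rfl⟩, ?_, rfl⟩
          intro v hv
          obtain ⟨e0, he0, hve0⟩ := H.no_isolated v hv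
          have h1 : (1:ℝ) ≤ ∑ e ∈ H.E, if v ∈ e then (1:ℝ) else 0 := by
            calc (1:ℝ) = ∑ e ∈ ({e0} : Finset (Finset α)), if v ∈ e then (1:ℝ) else 0 := by
                  rw [Finset.sum_singleton, if_pos hve0]
              _ ≤ ∑ e ∈ H.E, if v ∈ e then (1:ℝ) else 0 := by
                  refine Finset.sum_le_sum_of_subset_of_nonneg ?_ ?_
                  · simpa using he0
                  · intro e _ _
                    by_cases hve : v ∈ e
                    · rw [if_pos hve]; exact zero_le_one
                    · rw [if_neg hve]
          by_cases hvb : v ∈ D.bag t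
          · rw [if_pos hvb]; exact h1
          · rw [if_neg hvb]; linarith
        have hAeq : H.fracCoverSet (D.bag t) = sInf A := rfl
        have hlt : sInf A < sInf A + δ := lt_add_of_pos_right _ hδ
        obtain ⟨c, hc, hclt⟩ := (csInf_lt_iff hAbdd hAne).mp hlt
        obtain ⟨y, hy1, hy2, rfl⟩ := hc
        refine ⟨y, hy1, hy2, ?_⟩
        have hωt := hω t
        rw [hAeq] at hωt
        linarith
      choose y hy1 hy2 hy3 using hyt
      set Y : Finset α → ℝ := fun e => min 1 (∑ t ∈ X, y t e) with hY
      have hY1 : ∀ e, 0 ≤ Y e ∧ Y e ≤ 1 := fun e =>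
        ⟨le_min zero_le_one (Finset.sum_nonneg fun t _ => (hy1 t e).1), min_le_left _ _⟩
      have hYcov : ∀ v ∈ H.V,
          (if v ∈ S then (1:ℝ) else 0) ≤ ∑ e ∈ H.E, if v ∈ e then Y e else 0 := by
        intro v hv
        by_cases hvS : v ∈ S
        · rw [if_pos hvS]
          obtain ⟨t, htX, htv⟩ := hXcov v hvS
          have hvbag : v ∈ D.bag t := (hCv_mem v t).mp htv
          have h1 := hy2 t v hv
          rw [if_pos hvbag] at h1
          refine le_trans h1 (Finset.sum_le_sum ?_)
          intro e _
          by_cases hve : v ∈ e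
          · rw [if_pos hve, if_pos hve]
            exact le_min (hy1 t e).2 (Finset.single_le_sum (fun t' _ => (hy1 t' e).1) htX)
          · rw [if_neg hve, if_neg hve]
        · rw [if_neg hvS]
          exact Finset.sum_nonneg fun e _ => by
            by_cases hve : v ∈ e
            · rw [if_pos hve]; exact (hY1 e).1
            · rw [if_neg hve]
      have hYcost : ∑ e ∈ H.E, Y e ≤ (k : ℝ) * (ω + δ) := by
        calc ∑ e ∈ H.E, Y e ≤ ∑ e ∈ H.E, ∑ t ∈ X, y t e :=
            Finset.sum_le_sum fun e _ => min_le_right _ _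
          _ = ∑ t ∈ X, ∑ e ∈ H.E, y t e := Finset.sum_comm
          _ ≤ ∑ t ∈ X, (ω + δ) := Finset.sum_le_sum fun t _ => hy3 t
          _ = (k : ℝ) * (ω + δ) := by rw [Finset.sum_const, nsmul_eq_mul]
      have hle : H.fracCoverSet S ≤ ∑ e ∈ H.E, Y e := by
        rw [FinHypergraph.fracCoverSet, FinHypergraph.fracCover]
        exact csInf_le (hbdd _) ⟨Y, hY1, hYcov, rfl⟩
      have hkα : (k : ℝ) ≤ (H.indepNum S : ℝ) := by
        exact_mod_cast le_trans hXI hIindep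
      have hkδ : (k : ℝ) * δ = ε := by
        rw [hδdef]; field_simp
      calc H.fracCoverSet S ≤ (k : ℝ) * (ω + δ) := le_trans hle hYcost
        _ = (k : ℝ) * ω + (k : ℝ) * δ := by ring
        _ = (k : ℝ) * ω + ε := by rw [hkδ]
        _ ≤ (H.indepNum S : ℝ) * ω + ε :=
            add_le_add_left (mul_le_mul_of_nonneg_right hkα homega) _
  by_contra hcon
  push_neg at hcon
  have h2 := key ((H.fracCoverSet S - (H.indepNum S : ℝ) * ω) / 2) (by linarith)
  linarith
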